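/- Let F be a complete nonarchimedean normed field and a ∈ F with 0 < ‖a‖ < 1. Let c₀(F) denote the space of sequences x : ℕ → F with x_n → 0. Define T : c₀(F) → c₀(F) by (Tx)_n = −n·x_n − a^{−1}·x_{n+1}. Then T is a well-defined F-linear map, it is surjective, and its kernel equals the set of sequences x with x_n = 0 for all n ≥ 1. -/
import Mathlib
open Filter

theorem aux_nat_norm_le_one {F : Type*} [NormedField F]
    (hna : IsNonarchimedean (norm : F → ℝ)) (n : ℕ) : ‖(n : F)‖ ≤ 1 := by
  induction n with
  | zero => simp
  | succ k ih =>
      push_cast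
      calc ‖(k : F) + 1‖ ≤ max ‖(k : F)‖ ‖(1 : F)‖ := hna _ _
        _ ≤ 1 := by simp [ih]

theorem aux_wd {F : Type*} [NormedField F]
    (hna : IsNonarchimedean (norm : F → ℝ)) (a : F)
    (x : ℕ → F) (hx : Tendsto x atTop (nhds 0)) :
    Tendsto (fun n : ℕ => -(n : F) * x n - a⁻¹ * x (n + 1)) atTop (nhds 0) := by
  rw [tendsto_zero_iff_norm_tendsto_zero] at hx ⊢
  apply squeeze_zero (fun n => norm_nonneg _)
    (g := fun n => max (‖x n‖) (‖a⁻¹‖ * ‖x (n + 1)‖))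
  · intro n
    calc ‖-(n : F) * x n - a⁻¹ * x (n + 1)‖
        ≤ max ‖-(n : F) * x n‖ ‖a⁻¹ * x (n + 1)‖ := by
          rw [sub_eq_add_neg]
          exact le_trans (hna _ _) (by simp)
      _ ≤ max (‖x n‖) (‖a⁻¹‖ * ‖x (n + 1)‖) := by
          apply max_le_max
          · rw [norm_mul, norm_neg]
            exact mul_le_of_le_one_left (norm_nonneg _) (aux_nat_norm_le_one hna n)
          · rw [norm_mul]
  · have h1 : Tendsto (fun n : ℕ => ‖a⁻¹‖ * ‖x (n + 1)‖) atTop (nhds 0) := by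
      simpa using (hx.comp (tendsto_add_atTop_nat 1)).const_mul ‖a⁻¹‖
    simpa using hx.max h1

theorem aux_surj {F : Type*} [NormedField F]
    (hna : IsNonarchimedean (norm : F → ℝ)) (a : F) (ha0 : 0 < ‖a‖) (ha1 : ‖a‖ < 1)
    (b : ℕ → F) (hb : Tendsto b atTop (nhds 0)) :
    ∃ x : ℕ → F, Tendsto x atTop (nhds 0) ∧
      ∀ n : ℕ, -(n : F) * x n - a⁻¹ * x (n + 1) = b n := by
  have haz : a ≠ 0 := by simpa using ha0.ne'
  set x : ℕ → F := fun n => Nat.rec (0 : F) (fun k xk => -a * (b k + k * xk)) n with hxdef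
  have hrec : ∀ n : ℕ, x (n + 1) = -a * (b n + n * x n) := fun n => rfl
  refine ⟨x, ?_, ?_⟩
  · rw [NormedAddCommGroup.tendsto_nhds_zero]
    intro ε hε
    rw [NormedAddCommGroup.tendsto_nhds_zero] at hb
    obtain ⟨N, hN⟩ := (hb (ε/2) (by linarith)).exists_forall_of_atTop
    have key : ∀ m : ℕ, ‖x (N + m)‖ ≤ max (‖a‖ ^ m * ‖x N‖) (ε/2) := by
      intro m
      induction m with
      | zero => simp [le_max_left]
      | succ k ih =>
          have : ‖x (N + k + 1)‖ ≤ ‖a‖ * max ‖b (N + k)‖ ‖(N + k : ℕ) * x (N + k)‖ := by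
            rw [hrec, norm_mul, norm_neg]
            exact mul_le_mul_of_nonneg_left (hna _ _) (norm_nonneg _)
          have h2 : ‖(N + k : ℕ) * x (N + k)‖ ≤ ‖x (N + k)‖ := by
            rw [norm_mul]
            exact mul_le_of_le_one_left (norm_nonneg _) (aux_nat_norm_le_one hna _)
          have hb' : ‖b (N + k)‖ ≤ ε/2 := (hN (N + k) (by omega)).le
          rw [show N + (k + 1) = N + k + 1 from rfl]
          refine this.trans ?_
          have : max ‖b (N + k)‖ ‖(N + k : ℕ) * x (N + k)‖
              ≤ max (ε/2) (max (‖a‖ ^ k * ‖x N‖) (ε/2)) :=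
            max_le_max hb' (h2.trans ih)
          calc ‖a‖ * max ‖b (N + k)‖ ‖(N + k : ℕ) * x (N + k)‖
              ≤ ‖a‖ * max (ε/2) (max (‖a‖ ^ k * ‖x N‖) (ε/2)) :=
                mul_le_mul_of_nonneg_left this (norm_nonneg _)
            _ ≤ max (‖a‖ ^ (k + 1) * ‖x N‖) (ε/2) := by
                rw [mul_max_of_nonneg _ _ (norm_nonneg a), mul_max_of_nonneg _ _ (norm_nonneg a)]
                apply max_le
                · exact le_max_of_le_right (by nlinarith)
                · apply max_le
                  · exact le_max_of_le_left (by ring_nf; nlinarith [pow_nonneg (norm_nonneg a) k, norm_nonneg (x N)])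
                  · exact le_max_of_le_right (by nlinarith)
    have hpow : Tendsto (fun m : ℕ => ‖a‖ ^ m * ‖x N‖) atTop (nhds 0) := by
      simpa using (tendsto_pow_atTop_nhds_zero_of_lt_one (norm_nonneg a) ha1).mul_const ‖x N‖
    obtain ⟨M, hM⟩ := (hpow.eventually (gt_mem_nhds (by linarith : (0:ℝ) < ε/2))).exists_forall_of_atTop
    filter_upwards [eventually_ge_atTop (N + M)] with n hn
    have hnN : N ≤ n := by omega
    have := key (n - N)
    rw [Nat.add_sub_cancel' hnN] at this
    calc ‖x n‖ ≤ max (‖a‖ ^ (n - N) * ‖x N‖) (ε/2) := this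
      _ < ε := by
          apply max_lt
          · exact lt_trans (hM (n - N) (by omega)) (by linarith)
          · linarith
  · intro n
    rw [hrec]
    field_simp
    ring


/-- Let `F` be a complete nonarchimedean normed field and `a ∈ F` with `0 < ‖a‖ < 1`.
On the space `c₀(F)` of null sequences, the map `T` given by
`(Tx)_n = −n·x n − a⁻¹·x (n+1)` is a well-defined `F`-linear map, it is surjective,
and its kernel is the set of sequences vanishing in all degrees `n ≥ 1`. -/
theorem sen_operator_on_null_sequences {F : Type*} [NormedField F] [CompleteSpace F]
    (hna : IsNonarchimedean (norm : F → ℝ))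
    (a : F) (ha0 : 0 < ‖a‖) (ha1 : ‖a‖ < 1) :
    -- well-definedness: `T` maps null sequences to null sequences
    (∀ x : ℕ → F, Tendsto x atTop (nhds 0) →
        Tendsto (fun n : ℕ => -(n : F) * x n - a⁻¹ * x (n + 1)) atTop (nhds 0)) ∧
    -- `F`-linearity of `T`
    (∀ (c : F) (x y : ℕ → F),
        (fun n : ℕ => -(n : F) * (c * x n + y n) - a⁻¹ * (c * x (n + 1) + y (n + 1)))
          = fun n : ℕ => c * (-(n : F) * x n - a⁻¹ * x (n + 1)) +
              (-(n : F) * y n - a⁻¹ * y (n + 1))) ∧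
    -- surjectivity of `T` on null sequences
    (∀ b : ℕ → F, Tendsto b atTop (nhds 0) →
        ∃ x : ℕ → F, Tendsto x atTop (nhds 0) ∧
          ∀ n : ℕ, -(n : F) * x n - a⁻¹ * x (n + 1) = b n) ∧
    -- kernel of `T`
    (∀ x : ℕ → F, Tendsto x atTop (nhds 0) →
        ((∀ n : ℕ, -(n : F) * x n - a⁻¹ * x (n + 1) = 0) ↔ ∀ n : ℕ, 1 ≤ n → x n = 0)) := by
  have haz : a ≠ 0 := by simpa using ha0.ne'
  have haiz : a⁻¹ ≠ 0 := inv_ne_zero haz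
  refine ⟨aux_wd hna a, ?_, aux_surj hna a ha0 ha1, ?_⟩
  · intro c x y
    funext n
    ring
  · intro x _
    constructor
    · intro h
      have hstep : ∀ n : ℕ, x (n + 1) = -a * ((n : F) * x n) := by
        intro n
        have := h n
        field_simp at this
        linear_combination -this
      intro n hn
      induction n with
      | zero => omega
      | succ k ih =>
          rcases Nat.eq_zero_or_pos k with hk | hk
          · subst hk
            simpa using hstep 0
          · rw [hstep k, ih (by omega)]
            ring
    · intro h n
      have h1 : x (n + 1) = 0 := h (n + 1) (by omega)
      rcases Nat.eq_zero_or_pos n with hn | hn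
      · subst hn; simp [h1]
      · rw [h n hn, h1]; ring
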